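/- Let G be a group acting on a tree T (without inversions) such that the quotient G\T is a single edge with two distinct vertices v₁, v₂ joined by an edge e. Then G is the amalgamated free product of the stabilizers of v₁ and v₂ along the stabilizer of e. -/

import Mathlib

/-- The pair of vertex stabilizers, indexed by `Bool`. -/
def stabFam (G : Type u) [Group G] {V : Type u} [MulAction G V] (v₁ v₂ : V) :
    Bool → Subgroup G :=
  fun b => bif b then MulAction.stabilizer G v₁ else MulAction.stabilizer G v₂

/-- The inclusions of the edge stabilizer (the stabilizer of the edge `{v₁,v₂}`,
for an action without inversions) into the two vertex stabilizers. -/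
def edgeInc (G : Type u) [Group G] {V : Type u} [MulAction G V] (v₁ v₂ : V) :
    ∀ b : Bool,
      ↥(MulAction.stabilizer G v₁ ⊓ MulAction.stabilizer G v₂) →* ↥(stabFam G v₁ v₂ b)
  | true => Subgroup.inclusion inf_le_left
  | false => Subgroup.inclusion inf_le_right

/-- The canonical homomorphism from the amalgamated free product of the two
vertex stabilizers along the edge stabilizer to `G`. -/
def amalgToG (G : Type u) [Group G] {V : Type u} [MulAction G V] (v₁ v₂ : V) :
    Monoid.PushoutI (edgeInc G v₁ v₂) →* G :=
  Monoid.PushoutI.lift (fun b => (stabFam G v₁ v₂ b).subtype)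
    (MulAction.stabilizer G v₁ ⊓ MulAction.stabilizer G v₂).subtype
    (by intro b; cases b <;> (ext x; rfl))


universe u

open SimpleGraph

section helpers

variable {V : Type u} {G : Type u} [Group G] [MulAction G V]

def vertB (v₁ v₂ : V) (b : Bool) : V := bif b then v₁ else v₂

def AltList (v₁ v₂ : V) : Bool → List G → Prop
  | _, [] => True
  | b, g :: l => g • vertB v₁ v₂ b = vertB v₁ v₂ b ∧
      g • vertB v₁ v₂ (!b) ≠ vertB v₁ v₂ (!b) ∧ AltList v₁ v₂ (!b) l

variable {T : SimpleGraph V}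

theorem adj_vertB {v₁ v₂ : V} (he : T.Adj v₁ v₂) (b : Bool) :
    T.Adj (vertB v₁ v₂ b) (vertB v₁ v₂ (!b)) := by
  cases b
  · exact he.symm
  · exact he

theorem altList_key (hT : T.IsTree)
    (hact : ∀ (g : G) (a b : V), T.Adj a b → T.Adj (g • a) (g • b))
    {v₁ v₂ : V} (he : T.Adj v₁ v₂) :
    ∀ (l : List G) (b : Bool), l ≠ [] → AltList v₁ v₂ b l →
      ∃ x : V, (x = vertB v₁ v₂ b ∨ x = vertB v₁ v₂ (!b)) ∧
        ∃ p : T.Walk (vertB v₁ v₂ b) (l.prod • x),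
          p.IsPath ∧ p.length = l.length ∧ vertB v₁ v₂ (!b) ∉ p.support := by
  classical
  intro l
  induction l with
  | nil => intro b h _; exact absurd rfl h
  | cons g l' ih =>
    intro b _ halt
    obtain ⟨hfix, hmove, htail⟩ := halt
    have h0 : T.Adj (vertB v₁ v₂ b) (vertB v₁ v₂ (!b)) := adj_vertB he b
    have hadj : T.Adj (vertB v₁ v₂ b) (g • vertB v₁ v₂ (!b)) := by
      have := hact g _ _ h0; rwa [hfix] at this
    have hfix' : g⁻¹ • vertB v₁ v₂ b = vertB v₁ v₂ b := by
      conv_lhs => rw [← hfix]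
      rw [inv_smul_smul]
    rcases eq_or_ne l' [] with rfl | hne
    · refine ⟨vertB v₁ v₂ (!b), Or.inr rfl,
        (Walk.cons hadj Walk.nil).copy rfl (by simp), ?_, ?_, ?_⟩
      · rw [Walk.isPath_copy]; simp [Walk.cons_isPath_iff, hadj.ne]
      · rw [Walk.length_copy]; simp
      · simp only [Walk.support_copy, Walk.support_cons, Walk.support_nil]
        intro hmem
        rcases List.mem_cons.1 hmem with h | h
        · exact h0.ne' h
        · rw [List.mem_singleton] at h
          exact hmove h.symm
    · obtain ⟨x, hx, p', hp, hlen, hsup⟩ := ih (!b) hne htail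
      rw [Bool.not_not] at hsup
      let f : T →g T := ⟨fun u => g • u, fun h => hact g _ _ h⟩
      have hinj : Function.Injective f := MulAction.injective g
      have hv : g • (l'.prod • x) = (g :: l').prod • x := by
        rw [List.prod_cons, mul_smul]
      have hb_not : vertB v₁ v₂ b ∉ (p'.map f).support := by
        rw [Walk.support_map]
        intro hmem
        obtain ⟨u, hu, huv⟩ := List.mem_map.1 hmem
        have : u = vertB v₁ v₂ b := by
          have h1 : g • u = vertB v₁ v₂ b := huv
          rw [← hfix', ← h1, inv_smul_smul]
        rw [this] at hu
        exact hsup hu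
      refine ⟨x, ?_, (Walk.cons hadj (p'.map f)).copy rfl hv, ?_, ?_, ?_⟩
      · rcases hx with h | h
        · exact Or.inr h
        · rw [Bool.not_not] at h; exact Or.inl h
      · rw [Walk.isPath_copy]
        exact (Walk.cons_isPath_iff _ _).2 ⟨Walk.map_isPath_of_injective hinj hp, hb_not⟩
      · rw [Walk.length_copy]; simp [Walk.length_copy, Walk.length_cons, Walk.length_map, hlen]
      · rw [Walk.support_copy, Walk.support_cons]
        intro hmem
        rcases List.mem_cons.1 hmem with h | h
        · exact h0.ne' h
        · rw [Walk.support_map] at h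
          obtain ⟨u, hu, huv⟩ := List.mem_map.1 h
          have hu' : u = g⁻¹ • vertB v₁ v₂ (!b) := by
            rw [← huv]; show u = g⁻¹ • (g • u); rw [inv_smul_smul]
          have hune : u ≠ vertB v₁ v₂ (!b) := by
            rw [hu']
            intro hcon
            apply hmove
            have := congrArg (fun z => g • z) hcon
            simpa [smul_inv_smul] using this.symm
          have hq : (p'.takeUntil u hu).IsPath := hp.takeUntil hu
          have hbq : vertB v₁ v₂ b ∉ (p'.takeUntil u hu).support := fun hc =>
            hsup (p'.support_takeUntil_subset hu hc)
          have hr : (Walk.cons h0 (p'.takeUntil u hu)).IsPath :=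
            (Walk.cons_isPath_iff _ _).2 ⟨hq, hbq⟩
          have hadj2 : T.Adj (vertB v₁ v₂ b) u := by
            have := hact g⁻¹ _ _ h0
            rwa [hfix', ← hu'] at this
          obtain ⟨P, _, huniq⟩ := hT.existsUnique_path (vertB v₁ v₂ b) u
          have e1 := huniq _ hr
          have e2 := huniq (SimpleGraph.Path.singleton hadj2).1 (SimpleGraph.Path.singleton hadj2).2
          rw [← e2] at e1
          have hlen1 : (Walk.cons h0 (p'.takeUntil u hu)).length =
              (SimpleGraph.Path.singleton hadj2).1.length := by
            rw [e1]
          simp only [Walk.length_cons, SimpleGraph.Path.singleton, Walk.length_nil] at hlen1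
          have hq0 : (p'.takeUntil u hu).length = 0 := by omega
          exact hune (Walk.eq_of_length_eq_zero hq0).symm

theorem stab_smul {v₁ v₂ : V} (b : Bool) (s : ↥(stabFam G v₁ v₂ b)) :
    (s : G) • vertB v₁ v₂ b = vertB v₁ v₂ b := by
  cases b
  · exact MulAction.mem_stabilizer_iff.mp s.2
  · exact MulAction.mem_stabilizer_iff.mp s.2

theorem altList_of_chain (v₁ v₂ : V) :
    ∀ (ls : List (Σ b : Bool, ↥(stabFam G v₁ v₂ b))) (b : Bool),
      (∀ l ∈ ls.head?, Sigma.fst l = b) →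
      ls.Chain' (fun l l' => l.1 ≠ l'.1) →
      (∀ l ∈ ls, (l.2 : G) • vertB v₁ v₂ (!l.1) ≠ vertB v₁ v₂ (!l.1)) →
      AltList v₁ v₂ b (ls.map fun l => (l.2 : G)) := by
  intro ls
  induction ls with
  | nil => intro b _ _ _; trivial
  | cons a ls ih =>
    intro b hb hchain hmove
    have hab : a.1 = b := hb a rfl
    refine ⟨?_, ?_, ?_⟩
    · rw [← hab]; exact stab_smul a.1 a.2
    · rw [← hab]; exact hmove a (List.mem_cons_self (a := a) (l := ls))
    · refine ih (!b) ?_ (List.IsChain.tail hchain) ?_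
      · intro l hl
        have hne := (List.isChain_cons.1 hchain).1 l hl
        rw [hab] at hne
        revert hne
        cases l.1 <;> cases b <;> simp
      · exact fun l hl => hmove l (List.mem_cons_of_mem a hl)

end helpers


theorem amalgToG_of {G : Type u} [Group G] {V : Type u} [MulAction G V] (v₁ v₂ : V)
    (b : Bool) (s : ↥(stabFam G v₁ v₂ b)) :
    amalgToG G v₁ v₂ (Monoid.PushoutI.of (φ := edgeInc G v₁ v₂) b s) = (s : G) := by
  unfold amalgToG
  rw [Monoid.PushoutI.lift_of]
  rfl

theorem amalgToG_base {G : Type u} [Group G] {V : Type u} [MulAction G V] (v₁ v₂ : V)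
    (s : ↥(MulAction.stabilizer G v₁ ⊓ MulAction.stabilizer G v₂)) :
    amalgToG G v₁ v₂ (Monoid.PushoutI.base (edgeInc G v₁ v₂) s) = (s : G) := by
  unfold amalgToG
  rw [Monoid.PushoutI.lift_base]
  rfl

/-- (Serre) Let a group `G` act on a tree `T` without inversions, such that the
quotient `G\T` is a single edge with two distinct vertices, represented by
adjacent vertices `v₁, v₂` of `T`.  Then the canonical map from the
amalgamated free product of the stabilizers of `v₁` and `v₂` along the
stabilizer of the edge `{v₁, v₂}` to `G` is an isomorphism:
`G = Stab(v₁) *_{Stab(e)} Stab(v₂)`. -/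
theorem stmt_12 (V : Type u) (T : SimpleGraph V) (hT : T.IsTree)
    (G : Type u) [Group G] [MulAction G V]
    -- `G` acts on the graph `T`
    (hact : ∀ (g : G) (a b : V), T.Adj a b → T.Adj (g • a) (g • b))
    -- the action is without inversions
    (hnoinv : ∀ (g : G) (a b : V), T.Adj a b → ¬(g • a = b ∧ g • b = a))
    (v₁ v₂ : V) (he : T.Adj v₁ v₂)
    -- every vertex is in the orbit of `v₁` or of `v₂`, and these orbits differ
    (hvert : ∀ v : V, (∃ g : G, g • v = v₁) ∨ (∃ g : G, g • v = v₂))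
    (hdist : ¬∃ g : G, g • v₁ = v₂)
    -- every edge is in the orbit of the edge `{v₁, v₂}`
    (hedge : ∀ a b : V, T.Adj a b →
      ∃ g : G, (g • a = v₁ ∧ g • b = v₂) ∨ (g • a = v₂ ∧ g • b = v₁)) :
    Function.Bijective (amalgToG G v₁ v₂) := by
  classical
  have stab1 : ∀ g : G, g • v₁ = v₁ → g ∈ (amalgToG G v₁ v₂).range := fun g hg =>
    ⟨Monoid.PushoutI.of (φ := edgeInc G v₁ v₂) true ⟨g, hg⟩, amalgToG_of v₁ v₂ true ⟨g, hg⟩⟩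
  have stab2 : ∀ g : G, g • v₂ = v₂ → g ∈ (amalgToG G v₁ v₂).range := fun g hg =>
    ⟨Monoid.PushoutI.of (φ := edgeInc G v₁ v₂) false ⟨g, hg⟩, amalgToG_of v₁ v₂ false ⟨g, hg⟩⟩
  have main : ∀ n : ℕ, ∀ x : V, T.dist x v₁ = n → ∀ g : G,
      (g • v₁ = x ∨ g • v₂ = x) → g ∈ (amalgToG G v₁ v₂).range := by
    intro n
    induction n using Nat.strong_induction_on with
    | _ n ih =>
      intro x hx g hg
      rcases Nat.eq_zero_or_pos n with rfl | hpos
      · have hr : T.Reachable x v₁ := hT.isConnected.preconnected x v₁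
        have hx0 : x = v₁ := hr.dist_eq_zero_iff.1 hx
        subst hx0
        rcases hg with hg | hg
        · exact stab1 g hg
        · exact absurd ⟨g⁻¹, by rw [← hg, inv_smul_smul]⟩ hdist
      · have hxne : x ≠ v₁ := by
          intro h; subst h; rw [SimpleGraph.dist_self] at hx; omega
        have hr : T.Reachable x v₁ := hT.isConnected.preconnected x v₁
        obtain ⟨p, hp⟩ := hr.exists_walk_length_eq_dist
        obtain ⟨y, hxy, q, rfl⟩ := SimpleGraph.Walk.exists_eq_cons_of_ne hxne p
        rw [SimpleGraph.Walk.length_cons, hx] at hp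
        have hyd : T.dist y v₁ < n := lt_of_le_of_lt (SimpleGraph.dist_le q) (by omega)
        obtain ⟨t, ht⟩ := hedge x y hxy
        rcases hg with hg | hg
        · rcases ht with ⟨ht1, ht2⟩ | ⟨ht1, ht2⟩
          · have htg : (t * g) • v₁ = v₁ := by rw [mul_smul, hg, ht1]
            have hti : t⁻¹ • v₂ = y := by rw [← ht2, inv_smul_smul]
            have h1 : t⁻¹ ∈ (amalgToG G v₁ v₂).range :=
              ih (T.dist y v₁) hyd y rfl t⁻¹ (Or.inr hti)
            have hgg : g = t⁻¹ * (t * g) := by group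
            rw [hgg]
            exact mul_mem h1 (stab1 _ htg)
          · exact absurd ⟨t * g, by rw [mul_smul, hg, ht1]⟩ hdist
        · rcases ht with ⟨ht1, ht2⟩ | ⟨ht1, ht2⟩
          · have hcon : (t * g) • v₂ = v₁ := by rw [mul_smul, hg, ht1]
            exact absurd ⟨(t * g)⁻¹, by rw [← hcon, inv_smul_smul]⟩ hdist
          · have htg : (t * g) • v₂ = v₂ := by rw [mul_smul, hg, ht1]
            have hti : t⁻¹ • v₁ = y := by rw [← ht2, inv_smul_smul]
            have h1 : t⁻¹ ∈ (amalgToG G v₁ v₂).range :=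
              ih (T.dist y v₁) hyd y rfl t⁻¹ (Or.inl hti)
            have hgg : g = t⁻¹ * (t * g) := by group
            rw [hgg]
            exact mul_mem h1 (stab2 _ htg)
  constructor
  · -- injectivity
    have hφinj : ∀ b, Function.Injective (edgeInc G v₁ v₂ b) := by
      intro b; cases b
      · exact Subgroup.inclusion_injective inf_le_right
      · exact Subgroup.inclusion_injective inf_le_left
    rw [injective_iff_map_eq_one]
    intro x hx
    obtain ⟨d⟩ := Monoid.PushoutI.NormalWord.transversal_nonempty (edgeInc G v₁ v₂) hφinj
    set w : Monoid.PushoutI.NormalWord d := x • Monoid.PushoutI.NormalWord.empty with hwdef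
    have hwp : w.prod = x := by
      rw [hwdef, Monoid.PushoutI.NormalWord.prod_smul, Monoid.PushoutI.NormalWord.prod_empty,
        mul_one]
    have hsplit : w.prod = Monoid.PushoutI.base (edgeInc G v₁ v₂) w.head *
        Monoid.PushoutI.ofCoprodI w.toWord.prod := rfl
    set L : List G := w.toList.map (fun l => ((l.2 : ↥(stabFam G v₁ v₂ l.1)) : G)) with hLdef
    have hFprod : amalgToG G v₁ v₂ (Monoid.PushoutI.ofCoprodI w.toWord.prod) = L.prod := by
      rw [Monoid.CoprodI.Word.prod, map_list_prod, map_list_prod, hLdef]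
      refine congrArg List.prod ?_
      rw [List.map_map, List.map_map]
      refine List.map_congr_left fun l _ => ?_
      show amalgToG G v₁ v₂ (Monoid.PushoutI.ofCoprodI (Monoid.CoprodI.of l.2)) = _
      rw [Monoid.PushoutI.ofCoprodI_of]
      exact amalgToG_of v₁ v₂ l.1 l.2
    have hFx : amalgToG G v₁ v₂ x = ((w.head : G)) * L.prod := by
      rw [← hwp, hsplit, map_mul, hFprod, amalgToG_base]
    have hx' : ((w.head : G)) * L.prod = 1 := by rw [← hFx]; exact hx
    have hmove : ∀ l ∈ w.toList, (l.2 : G) • vertB v₁ v₂ (!l.1) ≠ vertB v₁ v₂ (!l.1) := by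
      rintro ⟨i, s⟩ hl hmv
      have hset : s ∈ d.set i := w.normalized i s hl
      have hne1 : s ≠ 1 := w.ne_one ⟨i, s⟩ hl
      have hb : (s : G) ∈ MulAction.stabilizer G v₁ ⊓ MulAction.stabilizer G v₂ := by
        rw [Subgroup.mem_inf]
        cases i
        · exact ⟨MulAction.mem_stabilizer_iff.2 hmv,
            MulAction.mem_stabilizer_iff.2 (stab_smul false s)⟩
        · exact ⟨MulAction.mem_stabilizer_iff.2 (stab_smul true s),
            MulAction.mem_stabilizer_iff.2 hmv⟩
      have hrange : s ∈ (edgeInc G v₁ v₂ i).range := by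
        cases i
        · exact ⟨⟨(s : G), hb⟩, Subtype.ext rfl⟩
        · exact ⟨⟨(s : G), hb⟩, Subtype.ext rfl⟩
      have hinjpair := (d.compl i).1 (a₁ := (⟨s, hrange⟩, ⟨1, d.one_mem i⟩))
        (a₂ := (⟨1, one_mem _⟩, ⟨s, hset⟩)) (by simp)
      have h2 : s = 1 := congrArg (fun z => z.1.1) hinjpair
      exact hne1 h2
    by_cases hnil : w.toList = []
    · have hL0 : L = [] := by rw [hLdef, hnil]; rfl
      rw [hL0, List.prod_nil, mul_one] at hx'
      have hh : w.head = 1 := Subtype.ext (by simpa using hx')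
      have hw0 : w.toWord.prod = 1 := by
        rw [Monoid.CoprodI.Word.prod, hnil]
        simp
      rw [← hwp, hsplit, hh, map_one, one_mul, hw0, map_one]
    · obtain ⟨a, rest, hL⟩ := List.exists_cons_of_ne_nil hnil
      have hhead : ∀ l ∈ w.toList.head?, Sigma.fst l = a.1 := by
        rw [hL]
        intro l hl
        simp only [List.head?_cons, Option.mem_some_iff] at hl
        rw [hl]
      have halt : AltList v₁ v₂ a.1 L := by
        rw [hLdef]
        exact altList_of_chain v₁ v₂ w.toList a.1 hhead w.chain_ne hmove
      have hLne : L ≠ [] := by rw [hLdef, hL]; simp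
      obtain ⟨x0, hx0, p, hpath, hplen, _⟩ := altList_key hT hact he L a.1 hLne halt
      have hLp : L.prod = ((w.head : G))⁻¹ := by
        have h3 := congrArg (fun z => ((w.head : G))⁻¹ * z) hx'
        simpa [mul_assoc] using h3
      have hLC : L.prod ∈ MulAction.stabilizer G v₁ ⊓ MulAction.stabilizer G v₂ := by
        rw [hLp]; exact inv_mem w.head.2
      have hfix1 : L.prod • v₁ = v₁ :=
        MulAction.mem_stabilizer_iff.1 (Subgroup.mem_inf.1 hLC).1
      have hfix2 : L.prod • v₂ = v₂ :=
        MulAction.mem_stabilizer_iff.1 (Subgroup.mem_inf.1 hLC).2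
      have hfx : L.prod • x0 = x0 := by
        rcases hx0 with h | h <;> rw [h] <;> cases a.1 <;>
          first
          | exact hfix1
          | exact hfix2
      have h0 : T.Adj (vertB v₁ v₂ a.1) (vertB v₁ v₂ (!a.1)) := adj_vertB he a.1
      obtain ⟨P, _, huniq⟩ := hT.existsUnique_path (vertB v₁ v₂ a.1) x0
      have hp' : (p.copy rfl hfx).IsPath := by rw [SimpleGraph.Walk.isPath_copy]; exact hpath
      have hp'len : (p.copy rfl hfx).length = L.length := by
        rw [SimpleGraph.Walk.length_copy]; exact hplen
      rcases hx0 with h | h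
      · subst h
        have e1 := huniq _ hp'
        have e2 := huniq SimpleGraph.Walk.nil SimpleGraph.Walk.IsPath.nil
        rw [← e2] at e1
        have hlen0 : L.length = 0 := by rw [← hp'len, e1]; rfl
        exact (hLne (List.length_eq_zero_iff.1 hlen0)).elim
      · subst h
        have e1 := huniq _ hp'
        have e2 := huniq (SimpleGraph.Path.singleton h0).1 (SimpleGraph.Path.singleton h0).2
        rw [← e2] at e1
        have hl1 : L.length = 1 := by
          rw [← hp'len, e1]
          simp [SimpleGraph.Path.singleton]
        obtain ⟨g0, hg0⟩ := List.length_eq_one_iff.1 hl1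
        rw [hg0] at halt
        refine absurd ?_ halt.2.1
        have hg0p : L.prod = g0 := by rw [hg0]; simp
        rw [← hg0p]
        cases a.1
        · exact hfix1
        · exact hfix2
  · intro g
    exact main (T.dist (g • v₁) v₁) (g • v₁) rfl g (Or.inl rfl)
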